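/- For α > 2, let G be a non-tree equilibrium graph of the max-distance network creation game and H a biconnected component of G. Assign each vertex w of G to its unique closest vertex v of H, giving sets S(v). Then for every v ∈ V(H) and every w ∈ S(v), d_G(v,w) ≤ D(v) + 2 − α. -/

import Mathlib

/-!
Max-distance network creation game (Demaine et al.):
`n` agents, agent `v` buys edges to the agents in `s v`, each at cost `α`.
The resulting graph has an edge `(u,v)` iff `u ∈ s v` or `v ∈ s u`.
Agent `v`'s cost is `α * |s v|` plus its eccentricity (max distance, `⊤` if
disconnected). A profile is a (pure Nash) equilibrium if no agent can strictly
decrease its cost by unilaterally changing its edge set.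
-/

open SimpleGraph
open scoped ENNReal

namespace NCG

/-- The undirected graph created by strategy profile `s`. -/
def graph (n : ℕ) (s : Fin n → Finset (Fin n)) : SimpleGraph (Fin n) :=
  SimpleGraph.fromRel (fun u v => v ∈ s u)

/-- Eccentricity `D(v) = max_u d_G(v,u)`, valued in `ℕ∞`. -/
noncomputable def ecc {n : ℕ} (G : SimpleGraph (Fin n)) (v : Fin n) : ℕ∞ :=
  ⨆ u, G.edist v u

/-- The cost of agent `v` under profile `s`: `α·|s v| + D(v)` (infinite if the
graph is disconnected). -/
noncomputable def cost {n : ℕ} (α : ℝ) (s : Fin n → Finset (Fin n)) (v : Fin n) : ℝ≥0∞ :=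
  ENNReal.ofReal α * (s v).card + (ecc (graph n s) v : ℝ≥0∞)

/-- Pure Nash equilibrium: no agent can strictly decrease its cost by a
unilateral deviation. -/
def IsEquilibrium {n : ℕ} (α : ℝ) (s : Fin n → Finset (Fin n)) : Prop :=
  ∀ (v : Fin n) (t : Finset (Fin n)), cost α s v ≤ cost α (Function.update s v t) v

/-- Radius `rad(G) = min_v D(v)`. -/
noncomputable def radius {n : ℕ} (G : SimpleGraph (Fin n)) : ℕ∞ :=
  ⨅ v, ecc G v

/-- Diameter `diam(G) = max_v D(v)`. -/
noncomputable def diam {n : ℕ} (G : SimpleGraph (Fin n)) : ℕ∞ :=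
  ⨆ v, ecc G v

/-- Interpret an extended natural number as a real number (`⊤ ↦ 0`). -/
noncomputable def entoR (x : ℕ∞) : ℝ := ((x : ℝ≥0∞)).toReal

/-- `T` is a shortest path tree of `G` rooted at `b`: a spanning tree of `G`
preserving all distances from `b`. -/
def IsSPT {n : ℕ} (G T : SimpleGraph (Fin n)) (b : Fin n) : Prop :=
  T ≤ G ∧ T.IsTree ∧ ∀ v, T.edist b v = G.edist b v

/-- `p` is the parent of `a` in the tree `T` rooted at `b`. -/
def IsParent {n : ℕ} (T : SimpleGraph (Fin n)) (b a p : Fin n) : Prop :=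
  T.Adj a p ∧ T.edist b p + 1 = T.edist b a

/-- The vertex set `B` (with more than two vertices) induces a biconnected
subgraph: removing any single vertex leaves it connected. -/
def IsBiconnected {n : ℕ} (G : SimpleGraph (Fin n)) (B : Finset (Fin n)) : Prop :=
  2 < B.card ∧ ∀ v ∈ B, (G.induce ((B : Set (Fin n)) \ {v})).Connected

/-- `B` is (the vertex set of) a biconnected component of `G`: a maximal
biconnected subgraph with more than two vertices. -/
def IsBicomp {n : ℕ} (G : SimpleGraph (Fin n)) (B : Finset (Fin n)) : Prop :=
  IsBiconnected G B ∧ ∀ B' : Finset (Fin n), B ⊆ B' → IsBiconnected G B' → B' = B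

/-- The induced subgraph of `G` on the vertex set `B`. -/
def Hgraph {n : ℕ} (G : SimpleGraph (Fin n)) (B : Finset (Fin n)) :
    SimpleGraph ((B : Set (Fin n))) :=
  G.induce (B : Set (Fin n))

/-- The degree of `v` inside the induced subgraph on `B`. -/
noncomputable def degH {n : ℕ} (G : SimpleGraph (Fin n)) (B : Finset (Fin n)) (v : Fin n) : ℕ :=
  {u : Fin n | u ∈ B ∧ G.Adj v u}.ncard

/-- A min cycle: a cycle whose internal (cycle) distances agree with the
distances in `G`, i.e. an isometric cycle. -/
def IsMinCycle {n : ℕ} (G : SimpleGraph (Fin n)) {v : Fin n} (c : G.Walk v v) : Prop :=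
  c.IsCycle ∧ ∀ x₁ ∈ c.support, ∀ x₂ ∈ c.support,
    c.toSubgraph.spanningCoe.edist x₁ x₂ = G.edist x₁ x₂

/-- A directed cycle: going around the cycle, each vertex buys the edge to its
successor (in one of the two cyclic orientations). -/
def IsDirectedCycle {n : ℕ} (s : Fin n → Finset (Fin n)) {v : Fin n}
    (c : (graph n s).Walk v v) : Prop :=
  (∀ d ∈ c.darts, d.toProd.2 ∈ s d.toProd.1) ∨ (∀ d ∈ c.darts, d.toProd.1 ∈ s d.toProd.2)

/-- A shopping vertex of the biconnected component `B` w.r.t. the shortest path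
tree `T`: a vertex of `B` buying an edge of the component that is not in `T`. -/
def IsShopping {n : ℕ} (s : Fin n → Finset (Fin n)) (T : SimpleGraph (Fin n))
    (B : Finset (Fin n)) (u : Fin n) : Prop :=
  u ∈ B ∧ ∃ w ∈ B, w ∈ s u ∧ (graph n s).Adj u w ∧ ¬ T.Adj u w

/-- The social cost of profile `s`. -/
noncomputable def socialCost {n : ℕ} (α : ℝ) (s : Fin n → Finset (Fin n)) : ℝ≥0∞ :=
  ∑ v, cost α s v

end NCG

namespace NCG


variable {n : ℕ} {G : SimpleGraph (Fin n)}

/-- Reachability within a vertex set. -/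
def ReachIn (G : SimpleGraph (Fin n)) (S : Set (Fin n)) (a b : Fin n) : Prop :=
  ∃ w : G.Walk a b, ∀ y ∈ w.support, y ∈ S

lemma ReachIn.refl {S : Set (Fin n)} {a : Fin n} (ha : a ∈ S) : ReachIn G S a a :=
  ⟨SimpleGraph.Walk.nil, by simp [ha]⟩

lemma ReachIn.symm {S : Set (Fin n)} {a b : Fin n} (h : ReachIn G S a b) : ReachIn G S b a := by
  obtain ⟨w, hw⟩ := h
  exact ⟨w.reverse, by simpa using hw⟩

lemma ReachIn.trans {S : Set (Fin n)} {a b c : Fin n} (h1 : ReachIn G S a b)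
    (h2 : ReachIn G S b c) : ReachIn G S a c := by
  obtain ⟨w1, hw1⟩ := h1
  obtain ⟨w2, hw2⟩ := h2
  refine ⟨w1.append w2, ?_⟩
  intro y hy
  rw [SimpleGraph.Walk.mem_support_append_iff] at hy
  exact hy.elim (hw1 y) (hw2 y)

lemma ReachIn.mono {S T : Set (Fin n)} {a b : Fin n} (hST : S ⊆ T) (h : ReachIn G S a b) :
    ReachIn G T a b := by
  obtain ⟨w, hw⟩ := h
  exact ⟨w, fun y hy => hST (hw y hy)⟩

lemma ReachIn.mem_left {S : Set (Fin n)} {a b : Fin n} (h : ReachIn G S a b) : a ∈ S := by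
  obtain ⟨w, hw⟩ := h; exact hw a w.start_mem_support

lemma ReachIn.mem_right {S : Set (Fin n)} {a b : Fin n} (h : ReachIn G S a b) : b ∈ S := by
  obtain ⟨w, hw⟩ := h; exact hw b w.end_mem_support

/-- A walk with support in `S` gives reachability in the induced graph. -/
lemma reachIn_to_induce {S : Set (Fin n)} {a b : Fin n} (h : ReachIn G S a b) :
    (G.induce S).Reachable ⟨a, h.mem_left⟩ ⟨b, h.mem_right⟩ := by
  obtain ⟨w, hw⟩ := h
  induction w with
  | nil => rfl
  | @cons u x b hadj p ih =>
    have hu : u ∈ S := hw u (by simp)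
    have hx : x ∈ S := hw x (by simp)
    have hmem : ∀ y ∈ p.support, y ∈ S := fun y hy => hw y (by simp [hy])
    have hstep : (G.induce S).Adj ⟨u, hu⟩ ⟨x, hx⟩ := by
      simp [SimpleGraph.comap_adj, hadj]
    exact (hstep.reachable).trans (ih hmem)

/-- Reachability in the induced graph gives a walk with support in `S`. -/
lemma induce_to_reachIn {S : Set (Fin n)} {a b : S}
    (h : (G.induce S).Reachable a b) : ReachIn G S a b := by
  obtain ⟨w⟩ := h
  induction w with
  | nil => exact ReachIn.refl (Subtype.coe_prop _)
  | @cons u x b hadj p ih =>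
    have hadj' : G.Adj u x := by simpa [SimpleGraph.comap_adj] using hadj
    obtain ⟨w', hw'⟩ := ih
    refine ⟨SimpleGraph.Walk.cons hadj' w', ?_⟩
    intro y hy
    rw [SimpleGraph.Walk.support_cons, List.mem_cons] at hy
    rcases hy with rfl | hy
    · exact Subtype.coe_prop _
    · exact hw' y hy

lemma connected_of_reachIn {S : Set (Fin n)} (hne : S.Nonempty)
    (h : ∀ a ∈ S, ∀ b ∈ S, ReachIn G S a b) : (G.induce S).Connected := by
  rw [SimpleGraph.connected_iff]
  refine ⟨fun a b => ?_, ⟨⟨hne.choose, hne.choose_spec⟩⟩⟩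
  have := reachIn_to_induce (h a a.2 b b.2)
  simpa using this

lemma reachIn_of_connected {S : Set (Fin n)} (h : (G.induce S).Connected)
    {a b : Fin n} (ha : a ∈ S) (hb : b ∈ S) : ReachIn G S a b :=
  induce_to_reachIn (h.preconnected ⟨a, ha⟩ ⟨b, hb⟩)

variable {n : ℕ} {G : SimpleGraph (Fin n)}

/-- Split a walk at the last vertex belonging to `B`. -/
lemma lastExit {B : Set (Fin n)} :
    ∀ {c w : Fin n} (W : G.Walk c w), (∃ y ∈ W.support, y ∈ B) →
    ∃ u, u ∈ B ∧ ∃ (W1 : G.Walk c u) (W2 : G.Walk u w),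
      W1.append W2 = W ∧ ∀ y ∈ W2.support, y ∈ B → y = u := by
  intro c w W
  induction W with
  | nil =>
    rintro ⟨y, hy, hyB⟩
    simp only [SimpleGraph.Walk.support_nil, List.mem_singleton] at hy
    subst hy
    exact ⟨y, hyB, SimpleGraph.Walk.nil, SimpleGraph.Walk.nil, by simp,
      by simp (config := {contextual := true})⟩
  | @cons a x w hadj p ih =>
    rintro ⟨y, hy, hyB⟩
    by_cases hp : ∃ z ∈ p.support, z ∈ B
    · obtain ⟨u, huB, W1, W2, hlen, hlast⟩ := ih hp
      exact ⟨u, huB, SimpleGraph.Walk.cons hadj W1, W2, by simp [hlen], hlast⟩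
    · -- no vertex of p is in B, so y = a
      have hy' : y = a := by
        rw [SimpleGraph.Walk.support_cons, List.mem_cons] at hy
        rcases hy with rfl | hy
        · rfl
        · exact absurd ⟨y, hy, hyB⟩ hp
      subst hy'
      refine ⟨y, hyB, SimpleGraph.Walk.nil, SimpleGraph.Walk.cons hadj p, by simp, ?_⟩
      intro z hz hzB
      rw [SimpleGraph.Walk.support_cons, List.mem_cons] at hz
      rcases hz with rfl | hz
      · rfl
      · exact absurd ⟨z, hz, hzB⟩ hp

/-- Split a walk at the first vertex belonging to a set `T` (walks meeting). -/
lemma firstMeet {T : Set (Fin n)} :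
    ∀ {u w : Fin n} (P : G.Walk u w), w ∈ T →
    ∃ z, z ∈ T ∧ ∃ (Pa : G.Walk u z) (Pb : G.Walk z w),
      Pa.append Pb = P ∧ ∀ y ∈ Pa.support, y ∈ T → y = z := by
  intro u w P
  induction P with
  | nil =>
    intro hw
    exact ⟨_, hw, SimpleGraph.Walk.nil, SimpleGraph.Walk.nil, by simp,
      by simp (config := {contextual := true})⟩
  | @cons a x w hadj p ih =>
    intro hw
    by_cases ha : a ∈ T
    · exact ⟨a, ha, SimpleGraph.Walk.nil, SimpleGraph.Walk.cons hadj p, by simp,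
        by simp (config := {contextual := true})⟩
    · obtain ⟨z, hzT, Pa, Pb, hspec, hfirst⟩ := ih hw
      refine ⟨z, hzT, SimpleGraph.Walk.cons hadj Pa, Pb, by simp [hspec], ?_⟩
      intro y hy hyT
      rw [SimpleGraph.Walk.support_cons, List.mem_cons] at hy
      rcases hy with rfl | hy
      · exact absurd hyT ha
      · exact hfirst y hy hyT

/-- In a connected induced graph with at least two vertices, every vertex has a neighbor. -/
lemma exists_neighbor_in {S : Set (Fin n)} (h : (G.induce S).Connected)
    {a b : Fin n} (ha : a ∈ S) (hb : b ∈ S) (hab : a ≠ b) :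
    ∃ x, x ∈ S ∧ G.Adj a x := by
  obtain ⟨w, hw⟩ := reachIn_of_connected h ha hb
  cases w with
  | nil => exact absurd rfl hab
  | cons hadj p =>
    exact ⟨_, hw _ (by simp), hadj⟩

section M4
variable {n : ℕ} {G : SimpleGraph (Fin n)}


/-- route from an internal vertex of a path to one of its endpoints avoiding `x`. -/
lemma path_route {u v x i : Fin n} (E : G.Walk u v) (hE : E.IsPath) (hi : i ∈ E.support)
    (hxi : x ≠ i) :
    ReachIn G ({y | y ∈ E.support} \ {x}) i u ∨ ReachIn G ({y | y ∈ E.support} \ {x}) i v := by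
  classical
  set T := E.takeUntil i hi with hT
  set Dp := E.dropUntil i hi with hD
  have hnd : (T.support ++ Dp.support.tail).Nodup := by
    have := hE.support_nodup
    rwa [← E.take_spec hi, SimpleGraph.Walk.support_append] at this
  by_cases hx : x ∈ T.support
  · right
    refine ⟨Dp, ?_⟩
    intro y hy
    refine ⟨SimpleGraph.Walk.support_dropUntil_subset E hi hy, ?_⟩
    simp only [Set.mem_singleton_iff]
    rintro rfl
    rw [SimpleGraph.Walk.support_eq_cons, List.mem_cons] at hy
    rcases hy with rfl | hy
    · exact hxi rfl
    · exact (List.disjoint_of_nodup_append hnd) hx hy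
  · left
    refine ⟨T.reverse, ?_⟩
    intro y hy
    rw [SimpleGraph.Walk.support_reverse, List.mem_reverse] at hy
    refine ⟨SimpleGraph.Walk.support_takeUntil_subset E hi hy, ?_⟩
    simp only [Set.mem_singleton_iff]
    rintro rfl
    exact hx hy

/-- Inside a biconnected set, any two vertices are joined within the set. -/
lemma reach_in_B {B : Finset (Fin n)} (hB : IsBiconnected G B) {a b : Fin n}
    (ha : a ∈ B) (hb : b ∈ B) : ReachIn G (B : Set (Fin n)) a b := by
  rcases eq_or_ne a b with rfl | hab
  · exact ReachIn.refl (by simpa using ha)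
  · have : (B \ {a, b}).Nonempty := by
      rw [← Finset.card_pos]
      have hle : (B ∩ {a, b}).card ≤ 2 :=
        le_trans (Finset.card_le_card (Finset.inter_subset_right)) (Finset.card_insert_le _ _ |>.trans (by simp))
      have h2 := Finset.card_sdiff_add_card_inter B {a, b}
      have h3 := hB.1
      omega
    obtain ⟨y, hy⟩ := this
    rw [Finset.mem_sdiff, Finset.mem_insert, Finset.mem_singleton] at hy
    push_neg at hy
    obtain ⟨hyB, hya, hyb⟩ := hy
    have hcon := hB.2 y hyB
    have := reachIn_of_connected hcon (a := a) (b := b)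
      (by exact ⟨ha, fun h => hya (by simpa using h.symm) |>.elim⟩ )
      (by exact ⟨hb, fun h => hyb (by simpa using h.symm) |>.elim⟩ )
    exact this.mono (by intro z hz; exact hz.1)

end M4

section M5
variable {n : ℕ} {G : SimpleGraph (Fin n)}

lemma ear_extension {B : Finset (Fin n)} (hB : IsBiconnected G B)
    {u v : Fin n} (hu : u ∈ B) (hv : v ∈ B) (huv : u ≠ v)
    (E : G.Walk u v) (hE : E.IsPath)
    (hint : ∀ y ∈ E.support, y ∈ B → y = u ∨ y = v) :
    IsBiconnected G (B ∪ E.support.toFinset) := by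
  classical
  set B' := B ∪ E.support.toFinset with hB'
  have hsub : B ⊆ B' := Finset.subset_union_left
  have hB'set : (B' : Set (Fin n)) = (B : Set (Fin n)) ∪ {y | y ∈ E.support} := by
    ext y; simp [hB']
  constructor
  · exact lt_of_lt_of_le hB.1 (Finset.card_le_card hsub)
  · intro x hx
    set S : Set (Fin n) := (B' : Set (Fin n)) \ {x} with hS
    have hBS : (B : Set (Fin n)) \ {x} ⊆ S := by
      intro y hy; exact ⟨by rw [hB'set]; exact Or.inl hy.1, hy.2⟩
    have hES : {y | y ∈ E.support} \ {x} ⊆ S := by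
      intro y hy; exact ⟨by rw [hB'set]; exact Or.inr hy.1, hy.2⟩
    -- a hub vertex reachable from everything in S
    have hub : ∃ h₀, h₀ ∈ S ∧ ∀ p ∈ S, ReachIn G S p h₀ := by
      by_cases hxB : x ∈ B
      · by_cases hxu : x = u
        · subst hxu
          refine ⟨v, ⟨by rw [hB'set]; exact Or.inl hv, by simpa using huv.symm⟩, ?_⟩
          intro p hp
          have hpx : p ≠ x := by
            have := hp.2; simpa using this
          rcases (by have h1 : p ∈ (B' : Set (Fin n)) := hp.1; rw [hB'set] at h1; exact h1 : p ∈ (B : Set (Fin n)) ∪ {y | y ∈ E.support}) with hpB | hpE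
          · -- inside B, avoid x = u
            have hcon := hB.2 x hxB
            have := reachIn_of_connected hcon (a := p) (b := v)
              ⟨hpB, by simpa using hpx⟩ ⟨hv, by simpa using (huv.symm : v ≠ x)⟩
            exact this.mono (fun z hz => hBS hz)
          · rcases path_route E hE hpE hpx.symm with hto | hto
            · exact absurd hto.mem_right (by simp)
            · exact hto.mono hES
        · by_cases hxv : x = v
          · subst hxv
            refine ⟨u, ⟨by rw [hB'set]; exact Or.inl hu, by simpa using huv⟩, ?_⟩
            intro p hp
            have hpx : p ≠ x := by have := hp.2; simpa using this
            rcases (by have h1 : p ∈ (B' : Set (Fin n)) := hp.1; rw [hB'set] at h1; exact h1 :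
                p ∈ (B : Set (Fin n)) ∪ {y | y ∈ E.support}) with hpB | hpE
            · have hcon := hB.2 x hxB
              have := reachIn_of_connected hcon (a := p) (b := u)
                ⟨hpB, by simpa using hpx⟩ ⟨hu, by simpa using huv⟩
              exact this.mono (fun z hz => hBS hz)
            · rcases path_route E hE hpE hpx.symm with hto | hto
              · exact hto.mono hES
              · exact absurd hto.mem_right (by simp)
          · -- x ∈ B, x ∉ {u, v} ; hub u
            refine ⟨u, ⟨by rw [hB'set]; exact Or.inl hu, by simpa using (Ne.symm hxu)⟩, ?_⟩
            intro p hp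
            have hpx : p ≠ x := by have := hp.2; simpa using this
            have hreach_vu : ReachIn G S v u := by
              have hcon := hB.2 x hxB
              have := reachIn_of_connected hcon (a := v) (b := u)
                ⟨hv, by simpa using (Ne.symm hxv)⟩ ⟨hu, by simpa using (Ne.symm hxu)⟩
              exact this.mono (fun z hz => hBS hz)
            rcases (by have h1 : p ∈ (B' : Set (Fin n)) := hp.1; rw [hB'set] at h1; exact h1 :
                p ∈ (B : Set (Fin n)) ∪ {y | y ∈ E.support}) with hpB | hpE
            · have hcon := hB.2 x hxB
              have := reachIn_of_connected hcon (a := p) (b := u)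
                ⟨hpB, by simpa using hpx⟩ ⟨hu, by simpa using (Ne.symm hxu)⟩
              exact this.mono (fun z hz => hBS hz)
            · rcases path_route E hE hpE hpx.symm with hto | hto
              · exact hto.mono hES
              · exact (hto.mono hES).trans hreach_vu
      · -- x ∉ B ; hub u
        have hBS' : (B : Set (Fin n)) ⊆ S := by
          intro y hy
          exact hBS ⟨hy, by rintro rfl; exact hxB (by simpa using hy)⟩
        refine ⟨u, hBS' hu, ?_⟩
        intro p hp
        have hpx : p ≠ x := by have := hp.2; simpa using this
        have hreach_vu : ReachIn G S v u := (reach_in_B hB hv hu).mono hBS'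
        rcases (by have h1 : p ∈ (B' : Set (Fin n)) := hp.1; rw [hB'set] at h1; exact h1 :
            p ∈ (B : Set (Fin n)) ∪ {y | y ∈ E.support}) with hpB | hpE
        · exact (reach_in_B hB hpB hu).mono hBS'
        · rcases path_route E hE hpE hpx.symm with hto | hto
          · exact hto.mono hES
          · exact (hto.mono hES).trans hreach_vu
    obtain ⟨h₀, hh₀, hhub⟩ := hub
    apply connected_of_reachIn ⟨h₀, hh₀⟩
    intro a ha b hb
    exact (hhub a ha).trans (hhub b hb).symm

end M5

section M6
variable {n : ℕ} {G : SimpleGraph (Fin n)}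

/-- The gateway lemma: every vertex of `B` reaches `w` through the closest
vertex `v` of `B`. -/
lemma gateway {B : Finset (Fin n)}
    (hB : IsBiconnected G B)
    (hmax : ∀ B' : Finset (Fin n), B ⊆ B' → IsBiconnected G B' → B' = B)
    {v w : Fin n} (hv : v ∈ B)
    (hclosest : ∀ u ∈ B, G.edist v w ≤ G.edist u w)
    (hreach : ∀ x y : Fin n, G.Reachable x y)
    {c : Fin n} (hc : c ∈ B) :
    G.edist c v + G.edist v w ≤ G.edist c w := by
  classical
  rcases eq_or_ne v w with rfl | hvw
  · simp [SimpleGraph.edist_self, SimpleGraph.edist_comm]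
  -- shortest path from c to w
  obtain ⟨P0, hP0⟩ := (hreach c w).exists_walk_length_eq_edist
  set P := P0.bypass with hPdef
  have hPpath : P.IsPath := SimpleGraph.Walk.bypass_isPath P0
  have hPlen : (P.length : ℕ∞) = G.edist c w := by
    refine le_antisymm ?_ ?_
    · rw [← hP0]
      exact_mod_cast Nat.cast_le.mpr (SimpleGraph.Walk.length_bypass_le P0)
    · exact SimpleGraph.edist_le P
  -- shortest path from v to w
  obtain ⟨Q0, hQ0⟩ := (hreach v w).exists_walk_length_eq_edist
  set Q := Q0.bypass with hQdef
  have hQpath : Q.IsPath := SimpleGraph.Walk.bypass_isPath Q0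
  have hQlen : (Q.length : ℕ∞) = G.edist v w := by
    refine le_antisymm ?_ ?_
    · rw [← hQ0]
      exact_mod_cast Nat.cast_le.mpr (SimpleGraph.Walk.length_bypass_le Q0)
    · exact SimpleGraph.edist_le Q
  -- split P at its last vertex in B
  obtain ⟨u, huB, W1, W2, hWspec, hWlast⟩ :=
    lastExit (B := (B : Set (Fin n))) P ⟨c, P.start_mem_support, by simpa using hc⟩
  -- split Q at its last vertex in B; it must be v itself
  obtain ⟨v₂, hv₂B, Q1, Q2, hQspec, hQlast⟩ :=
    lastExit (B := (B : Set (Fin n))) Q ⟨v, Q.start_mem_support, by simpa using hv⟩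
  have hv₂B' : v₂ ∈ B := by simpa using hv₂B
  have hQlensum : Q1.length + Q2.length = Q.length := by
    rw [← hQspec, SimpleGraph.Walk.length_append]
  have hQ1zero : Q1.length = 0 := by
    have h1 : G.edist v₂ w ≤ (Q2.length : ℕ∞) := SimpleGraph.edist_le Q2
    have h2 : G.edist v w ≤ G.edist v₂ w := hclosest v₂ hv₂B'
    have h3 : (Q.length : ℕ∞) ≤ (Q2.length : ℕ∞) := hQlen ▸ (h2.trans h1)
    have h4 : Q.length ≤ Q2.length := by exact_mod_cast h3
    omega
  have hv₂v : v = v₂ := SimpleGraph.Walk.eq_of_length_eq_zero hQ1zero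
  subst hv₂v
  have hQ2path : Q2.IsPath := by
    rw [← hQspec] at hQpath
    exact hQpath.of_append_right
  rcases eq_or_ne u v with rfl | huv
  · -- the gate is v : direct computation
    have h1 : G.edist c u ≤ (W1.length : ℕ∞) := SimpleGraph.edist_le W1
    have h2 : G.edist u w ≤ (W2.length : ℕ∞) := SimpleGraph.edist_le W2
    have hsum : ((W1.length + W2.length : ℕ) : ℕ∞) = G.edist c w := by
      rw [← SimpleGraph.Walk.length_append, hWspec, hPlen]
    calc G.edist c u + G.edist u w ≤ (W1.length : ℕ∞) + (W2.length : ℕ∞) :=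
          add_le_add h1 h2
      _ = ((W1.length + W2.length : ℕ) : ℕ∞) := by push_cast; ring
      _ = G.edist c w := hsum
  · -- two distinct gates: contradiction with maximality via an ear
    exfalso
    have hW2path : W2.IsPath := by
      rw [← hWspec] at hPpath
      exact hPpath.of_append_right
    -- w must be outside B
    have hwB : w ∉ B := by
      intro hwB
      have := hclosest w hwB
      simp [SimpleGraph.edist_self] at this
      first
      | exact hvw this
      | exact hvw (SimpleGraph.edist_eq_zero_iff.mp (le_antisymm this (zero_le _)))

    -- first meeting point of W2 with Q2
    obtain ⟨z, hzQ2, Pa, Pb, hPaspec, hPafirst⟩ :=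
      firstMeet (T := {y | y ∈ Q2.support}) W2 (by simpa using Q2.end_mem_support)
    have hzQ2' : z ∈ Q2.support := hzQ2
    have hPapath : Pa.IsPath := by
      rw [← hPaspec] at hW2path
      exact hW2path.of_append_left
    set Qa := Q2.takeUntil z hzQ2' with hQa
    have hQapath : Qa.IsPath := hQ2path.takeUntil hzQ2'
    -- the ear
    set E := Pa.append Qa.reverse with hE
    have hPaW2 : ∀ y ∈ Pa.support, y ∈ W2.support := by
      intro y hy
      rw [← hPaspec, SimpleGraph.Walk.support_append]
      exact List.mem_append.mpr (Or.inl hy)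
    have hQaQ2 : ∀ y ∈ Qa.support, y ∈ Q2.support :=
      fun y hy => SimpleGraph.Walk.support_takeUntil_subset Q2 hzQ2' hy
    have hEsupp : ∀ y ∈ E.support, y ∈ Pa.support ∨ y ∈ Qa.support := by
      intro y hy
      rw [hE, SimpleGraph.Walk.support_append] at hy
      rcases List.mem_append.mp hy with h | h
      · exact Or.inl h
      · right
        have : y ∈ Qa.reverse.support := List.mem_of_mem_tail h
        rwa [SimpleGraph.Walk.support_reverse, List.mem_reverse] at this
    have hEpath : E.IsPath := by
      rw [SimpleGraph.Walk.isPath_def, hE, SimpleGraph.Walk.support_append]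
      rw [List.nodup_append]
      refine ⟨hPapath.support_nodup, ?_, ?_⟩
      · have hnd : Qa.reverse.support.Nodup := by
          rw [SimpleGraph.Walk.support_reverse]
          exact List.nodup_reverse.mpr hQapath.support_nodup
        rw [SimpleGraph.Walk.support_eq_cons Qa.reverse] at hnd
        exact (List.nodup_cons.mp hnd).2
      · intro y hyPa y' hytail hyy'
        subst hyy'
        have hyQa : y ∈ Qa.reverse.support := List.mem_of_mem_tail hytail
        rw [SimpleGraph.Walk.support_reverse, List.mem_reverse] at hyQa
        have : y = z := hPafirst y hyPa (hQaQ2 y hyQa)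
        subst this
        -- y = z is the head of Qa.reverse.support, so cannot be in the tail
        have hnd : Qa.reverse.support.Nodup := by
          rw [SimpleGraph.Walk.support_reverse]
          exact List.nodup_reverse.mpr hQapath.support_nodup
        rw [SimpleGraph.Walk.support_eq_cons Qa.reverse] at hnd
        exact (List.nodup_cons.mp hnd).1 hytail
    -- internal vertices of E outside B
    have hint : ∀ y ∈ E.support, y ∈ B → y = u ∨ y = v := by
      intro y hy hyB
      rcases hEsupp y hy with h | h
      · exact Or.inl (hWlast y (hPaW2 y h) (by simpa using hyB))
      · exact Or.inr (hQlast y (hQaQ2 y h) (by simpa using hyB))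
    have hbic := ear_extension hB huB hv huv E hEpath hint
    have heq := hmax _ Finset.subset_union_left hbic
    -- z belongs to the extension, hence to B, hence z = u and z = v
    have hzE : z ∈ E.support := by
      rw [hE, SimpleGraph.Walk.support_append]
      exact List.mem_append.mpr (Or.inl Pa.end_mem_support)
    have hzB : z ∈ B := by
      rw [← heq]
      exact Finset.mem_union_right _ (by simpa using hzE)
    have h1 : z = u := hWlast z (hPaW2 z Pa.end_mem_support) (by simpa using hzB)
    have h2 : z = v := hQlast z hzQ2' (by simpa using hzB)
    exact huv (h1 ▸ h2)

end M6

section M7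
variable {n : ℕ} {G : SimpleGraph (Fin n)}

lemma delete_edge_dist {v a b b' : Fin n}
    (hab : G.Adj a b)
    (hcase : G.edist v a = G.edist v b ∨
      (G.edist v b + 1 = G.edist v a ∧ G.Adj a b' ∧ b' ≠ b ∧ G.edist v b' + 1 = G.edist v a)) :
    ∀ x, (G.deleteEdges {s(a, b)}).edist v x ≤ G.edist v x := by
  classical
  set G' := G.deleteEdges {s(a, b)} with hG'
  have key : ∀ (k : ℕ) (x : Fin n), G.edist v x ≤ (k : ℕ∞) → G'.edist v x ≤ G.edist v x := by
    intro k
    induction k with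
    | zero =>
      intro x hx
      have : G.edist v x = 0 := le_antisymm (by exact_mod_cast hx) zero_le
      have hxv : v = x := SimpleGraph.edist_eq_zero_iff.mp this
      subst hxv
      simp [SimpleGraph.edist_self]
    | succ k ih =>
      intro x hx
      by_cases hk : G.edist v x ≤ (k : ℕ∞)
      · exact ih x hk
      · have hxk : G.edist v x = ((k + 1 : ℕ) : ℕ∞) := by
          push_neg at hk
          refine le_antisymm hx ?_
          have : ((k : ℕ∞) + 1) ≤ G.edist v x := ENat.add_one_le_iff (by simp) |>.mpr hk
          exact_mod_cast this
        obtain ⟨W, hW⟩ := SimpleGraph.exists_walk_of_edist_eq_coe hxk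
        have hRlen : W.reverse.length = k + 1 := by
          rw [SimpleGraph.Walk.length_reverse]; exact hW
        obtain ⟨y, hadj, q, hqlen⟩ : ∃ y, G.Adj x y ∧ ∃ q : G.Walk y v, q.length = k := by
          cases hR : W.reverse with
          | nil => rw [hR] at hRlen; simp at hRlen
          | cons h q =>
            rw [hR] at hRlen
            simp only [SimpleGraph.Walk.length_cons, Nat.add_right_cancel_iff] at hRlen
            exact ⟨_, h, q, hRlen⟩
        have hyk : G.edist v y ≤ (k : ℕ∞) := by
          have h := SimpleGraph.edist_le q.reverse
          rwa [SimpleGraph.Walk.length_reverse, hqlen] at h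
        have hy' : G'.edist v y ≤ (k : ℕ∞) := (ih y hyk).trans hyk
        by_cases hsym : s(y, x) = s(a, b)
        · rw [Sym2.eq_iff] at hsym
          rcases hsym with ⟨rfl, rfl⟩ | ⟨rfl, rfl⟩
          · -- y = a, x = b : impossible by hcase
            exfalso
            rcases hcase with h | ⟨h1, _⟩
            · rw [h, hxk] at hyk
              have : k + 1 ≤ k := by exact_mod_cast hyk
              omega
            · rw [hxk] at h1
              rw [← h1] at hyk
              have : (k + 1) + 1 ≤ k := by exact_mod_cast hyk
              omega
          · -- y = b, x = a
            rcases hcase with h | ⟨h1, hadj', hne, h2⟩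
            · rw [← h] at hyk
              exact absurd hyk hk
            · have hb'k : G.edist v b' = (k : ℕ∞) := by
                rw [hxk] at h2
                have h3 : G.edist v b' + 1 = ((k : ℕ∞) + 1) := by
                  rw [h2]; push_cast; ring
                exact WithTop.add_right_cancel (by exact ENat.one_ne_top) h3
              have hb'' : G'.edist v b' ≤ (k : ℕ∞) := by
                rw [← hb'k]
                exact (ih b' (le_of_eq hb'k)).trans (le_of_eq hb'k) |>.trans (le_of_eq hb'k.symm)
              have hadjG' : G'.Adj x b' := by
                rw [hG', SimpleGraph.deleteEdges_adj]
                refine ⟨hadj', ?_⟩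
                simp only [Set.mem_singleton_iff, Sym2.eq_iff]
                push_neg
                constructor
                · intro _; exact hne
                · intro hxy; exact absurd hxy hab.ne
              have hstep : G'.edist v x ≤ G'.edist v b' + 1 := by
                have h1' : G'.edist b' x ≤ 1 :=
                  le_of_eq (SimpleGraph.edist_eq_one_iff_adj.mpr hadjG'.symm)
                calc G'.edist v x ≤ G'.edist v b' + G'.edist b' x := SimpleGraph.edist_triangle
                  _ ≤ G'.edist v b' + 1 := add_le_add_right h1' _
              rw [hxk]
              refine hstep.trans ?_
              push_cast
              exact add_le_add_left hb'' 1
        · -- the edge survives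
          have hadjG' : G'.Adj y x := by
            rw [hG', SimpleGraph.deleteEdges_adj]
            exact ⟨hadj.symm, by simpa using hsym⟩
          have hstep : G'.edist v x ≤ G'.edist v y + 1 := by
            have h1' : G'.edist y x ≤ 1 :=
              le_of_eq (SimpleGraph.edist_eq_one_iff_adj.mpr hadjG')
            calc G'.edist v x ≤ G'.edist v y + G'.edist y x := SimpleGraph.edist_triangle
              _ ≤ G'.edist v y + 1 := add_le_add_right h1' _
          rw [hxk]
          refine hstep.trans ?_
          push_cast
          exact add_le_add_left hy' 1
  intro x
  rcases eq_or_ne (G.edist v x) ⊤ with htop | hne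
  · rw [htop]; exact le_top
  · obtain ⟨k, hk⟩ := WithTop.ne_top_iff_exists.mp hne
    exact key k x (le_of_eq hk.symm)

end M7

section M8
variable {n : ℕ} {G : SimpleGraph (Fin n)}

lemma two_neighbors {B : Finset (Fin n)} (hB : IsBiconnected G B) {a : Fin n} (ha : a ∈ B) :
    ∃ b b', b ∈ B ∧ b' ∈ B ∧ b ≠ b' ∧ G.Adj a b ∧ G.Adj a b' := by
  classical
  have hcard := hB.1
  -- first neighbor
  obtain ⟨z, hzB, hza⟩ : ∃ z ∈ B, z ≠ a := by
    have : (B.erase a).Nonempty := by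
      rw [← Finset.card_pos, Finset.card_erase_of_mem ha]
      omega
    obtain ⟨z, hz⟩ := this
    exact ⟨z, Finset.mem_of_mem_erase hz, Finset.ne_of_mem_erase hz⟩
  obtain ⟨y, hy⟩ : (B \ {a, z}).Nonempty := by
    rw [← Finset.card_pos]
    have h2 := Finset.card_sdiff_add_card_inter B {a, z}
    have hle : (B ∩ {a, z}).card ≤ 2 :=
      le_trans (Finset.card_le_card Finset.inter_subset_right)
        ((Finset.card_insert_le _ _).trans (by simp))
    omega
  rw [Finset.mem_sdiff, Finset.mem_insert, Finset.mem_singleton] at hy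
  push_neg at hy
  obtain ⟨hyB, hya, hyz⟩ := hy
  obtain ⟨b, hbS, hab⟩ := exists_neighbor_in (hB.2 z hzB)
    (by exact ⟨ha, by simpa using (Ne.symm hza)⟩) (by exact ⟨hyB, by simpa using hyz⟩) (Ne.symm hya)
  have hbB : b ∈ B := hbS.1
  -- second neighbor, avoiding b
  obtain ⟨y2, hy2⟩ : (B \ {a, b}).Nonempty := by
    rw [← Finset.card_pos]
    have h2 := Finset.card_sdiff_add_card_inter B {a, b}
    have hle : (B ∩ {a, b}).card ≤ 2 :=
      le_trans (Finset.card_le_card Finset.inter_subset_right)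
        ((Finset.card_insert_le _ _).trans (by simp))
    omega
  rw [Finset.mem_sdiff, Finset.mem_insert, Finset.mem_singleton] at hy2
  push_neg at hy2
  obtain ⟨hy2B, hy2a, hy2b⟩ := hy2
  obtain ⟨b', hb'S, hab'⟩ := exists_neighbor_in (hB.2 b hbB)
    (by exact ⟨ha, by simpa using hab.ne⟩) (by exact ⟨hy2B, by simpa using hy2b⟩) (Ne.symm hy2a)
  have hb'B : b' ∈ B := hb'S.1
  have hb'b : b' ≠ b := by
    have := hb'S.2
    simpa using this
  exact ⟨b, b', hbB, hb'B, hb'b.symm, hab, hab'⟩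

lemma exists_good_edge {B : Finset (Fin n)} (hB : IsBiconnected G B)
    {v : Fin n} (hv : v ∈ B) (hfin : ∀ x, G.edist v x ≠ ⊤) :
    ∃ a b, a ∈ B ∧ b ∈ B ∧ G.Adj a b ∧ ∃ b',
      (G.edist v a = G.edist v b ∨
        (G.edist v b + 1 = G.edist v a ∧ G.Adj a b' ∧ b' ≠ b ∧ G.edist v b' + 1 = G.edist v a)) := by
  classical
  have hne : B.Nonempty := Finset.card_pos.mp (by have := hB.1; omega)
  obtain ⟨a, haB, hamax⟩ := Finset.exists_max_image B (fun x => G.edist v x) hne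
  obtain ⟨b, b', hbB, hb'B, hbb', hab, hab'⟩ := two_neighbors hB haB
  -- adjacent vertices have distance (from v) differing by at most one
  have hstep : ∀ {x y : Fin n}, G.Adj x y → G.edist v x ≤ G.edist v y + 1 := by
    intro x y hxy
    calc G.edist v x ≤ G.edist v y + G.edist y x := SimpleGraph.edist_triangle
      _ ≤ G.edist v y + 1 := add_le_add_right
          (le_of_eq (SimpleGraph.edist_eq_one_iff_adj.mpr hxy.symm)) _
  rcases eq_or_ne (G.edist v b) (G.edist v a) with heq | hne1
  · exact ⟨a, b, haB, hbB, hab, b', Or.inl heq.symm⟩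
  rcases eq_or_ne (G.edist v b') (G.edist v a) with heq' | hne2
  · exact ⟨a, b', haB, hb'B, hab', b, Or.inl heq'.symm⟩
  · -- both neighbors strictly below the max: both at distance m - 1
    have hex : ∀ {y : Fin n}, y ∈ B → G.Adj a y → G.edist v y ≠ G.edist v a →
        G.edist v y + 1 = G.edist v a := by
      intro y hyB hay hne'
      have h1 : G.edist v y ≤ G.edist v a := hamax y hyB
      have h2 : G.edist v y < G.edist v a := lt_of_le_of_ne h1 hne'
      have h3 : G.edist v y + 1 ≤ G.edist v a := ENat.add_one_le_iff (hfin y) |>.mpr h2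
      exact le_antisymm h3 (hstep hay)
    exact ⟨a, b, haB, hbB, hab, b',
      Or.inr ⟨hex hbB hab hne1, hab', hbb'.symm, hex hb'B hab' hne2⟩⟩

end M8

lemma graph_adj {n : ℕ} (s : Fin n → Finset (Fin n)) (u v : Fin n) :
    (graph n s).Adj u v ↔ u ≠ v ∧ (v ∈ s u ∨ u ∈ s v) := by
  simp [graph, fromRel_adj]

lemma edist_le_ecc {n : ℕ} (G : SimpleGraph (Fin n)) (v u : Fin n) :
    G.edist v u ≤ ecc G v := le_iSup (fun u => G.edist v u) u

lemma ecc_ne_top {n : ℕ} {α : ℝ} {s : Fin n → Finset (Fin n)}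
    (hs : IsEquilibrium α s) (v : Fin n) : ecc (graph n s) v ≠ ⊤ := by
  have h := hs v (Finset.univ.erase v)
  set s' := Function.update s v (Finset.univ.erase v) with hs'
  have hecc' : ecc (graph n s') v ≤ 1 := by
    apply iSup_le
    intro u
    rcases eq_or_ne v u with rfl | hne
    · simp [SimpleGraph.edist_self]
    · have : (graph n s').Adj v u := by
        rw [graph_adj]
        refine ⟨hne, Or.inl ?_⟩
        simp [hs', Function.update_self, Finset.mem_erase, hne.symm]
      rw [← SimpleGraph.edist_eq_one_iff_adj] at this
      exact this.le
  have hcost' : cost α s' v ≠ ⊤ := by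
    rw [cost]
    refine ENNReal.add_ne_top.mpr ⟨?_, ?_⟩
    · exact ENNReal.mul_ne_top ENNReal.ofReal_ne_top (by simp)
    · have : ((ecc (graph n s') v : ℕ∞) : ℝ≥0∞) ≤ ((1 : ℕ∞) : ℝ≥0∞) :=
        ENat.toENNReal_le.mpr hecc'
      exact ne_top_of_le_ne_top (by simp) this
  have hle : (ecc (graph n s) v : ℝ≥0∞) ≤ cost α s v := le_add_self
  have := lt_of_le_of_lt (hle.trans h) (lt_top_iff_ne_top.mpr hcost')
  intro hc
  rw [hc] at this
  simp at this

section M9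
variable {n : ℕ}

lemma enat_cast_ne_top {x : ℕ∞} (h : x ≠ ⊤) : (x : ℝ≥0∞) ≠ ⊤ := by
  obtain ⟨k, rfl⟩ := WithTop.ne_top_iff_exists.mp h
  exact_mod_cast ENNReal.natCast_ne_top k

lemma deleteEdges_le_update (s : Fin n → Finset (Fin n)) (c o : Fin n) :
    (graph n s).deleteEdges {s(c, o)} ≤ graph n (Function.update s c ((s c).erase o)) := by
  classical
  intro u1 u2 hadj
  rw [SimpleGraph.deleteEdges_adj] at hadj
  obtain ⟨h1, h2⟩ := hadj
  simp only [Set.mem_singleton_iff] at h2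
  rw [graph_adj] at h1
  rw [graph_adj]
  refine ⟨h1.1, ?_⟩
  rcases h1.2 with hm | hm
  · left
    by_cases hc : u1 = c
    · subst hc
      rw [Function.update_self, Finset.mem_erase]
      refine ⟨?_, hm⟩
      rintro rfl
      exact h2 rfl
    · rwa [Function.update_of_ne hc]
  · right
    by_cases hc : u2 = c
    · subst hc
      rw [Function.update_self, Finset.mem_erase]
      exact ⟨fun h => h2 (by rw [h]; exact Sym2.eq_swap), hm⟩
    · rwa [Function.update_of_ne hc]

lemma buyer_chain {α : ℝ} {s : Fin n → Finset (Fin n)} (hs : IsEquilibrium α s)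
    {v w c o : Fin n} (ho : o ∈ s c)
    (hdel : ∀ x, ((graph n s).deleteEdges {s(c, o)}).edist v x ≤ (graph n s).edist v x)
    (hgate : (graph n s).edist c v + (graph n s).edist v w ≤ (graph n s).edist c w)
    (hfinecc : ∀ u, ecc (graph n s) u ≠ ⊤) :
    ENNReal.ofReal α + ((graph n s).edist v w : ℝ≥0∞) ≤ ((ecc (graph n s) v : ℕ∞) : ℝ≥0∞) := by
  classical
  set GG := graph n s with hGG
  set A := ENNReal.ofReal α with hA
  set t := (s c).erase o with ht
  set G' := graph n (Function.update s c t) with hG'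
  set Gdel := GG.deleteEdges {s(c, o)} with hGdel
  have hedfin : ∀ x y : Fin n, GG.edist x y ≠ ⊤ := by
    intro x y h
    exact hfinecc x (top_le_iff.mp (h ▸ edist_le_ecc GG x y))
  -- step 1 : equilibrium gives A + ecc c ≤ ecc' c
  have hK : 0 < (s c).card := Finset.card_pos.mpr ⟨o, ho⟩
  have heq := hs c t
  rw [cost, cost] at heq
  have hupd : Function.update s c t c = t := Function.update_self c t s
  rw [hupd] at heq
  have htcard : (t.card : ℝ≥0∞) + 1 = ((s c).card : ℝ≥0∞) := by
    rw [ht, Finset.card_erase_of_mem ho]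
    exact_mod_cast congrArg (Nat.cast (R := ℝ≥0∞)) (Nat.succ_pred_eq_of_pos hK)
  have hsplit : A * ((s c).card : ℝ≥0∞) = A * (t.card : ℝ≥0∞) + A := by
    rw [← htcard, mul_add, mul_one]
  rw [hsplit, add_assoc] at heq
  have hne' : A * (t.card : ℝ≥0∞) ≠ ⊤ :=
    ENNReal.mul_ne_top ENNReal.ofReal_ne_top (by simp)
  have hstep1 : A + ((ecc GG c : ℕ∞) : ℝ≥0∞) ≤ ((ecc G' c : ℕ∞) : ℝ≥0∞) :=
    (ENNReal.add_le_add_iff_left hne').mp heq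
  -- step 2 : ecc G' c ≤ edist c v + ecc v  (in ℕ∞)
  have hsub : Gdel ≤ G' := deleteEdges_le_update s c o
  have hstep2 : ecc G' c ≤ GG.edist c v + ecc GG v := by
    apply iSup_le
    intro u
    have h1 : G'.edist c u ≤ G'.edist c v + G'.edist v u := SimpleGraph.edist_triangle
    have h2 : G'.edist c v ≤ GG.edist c v := by
      calc G'.edist c v ≤ Gdel.edist c v := SimpleGraph.edist_anti hsub
        _ = Gdel.edist v c := SimpleGraph.edist_comm
        _ ≤ GG.edist v c := hdel c
        _ = GG.edist c v := SimpleGraph.edist_comm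
    have h3 : G'.edist v u ≤ ecc GG v := by
      calc G'.edist v u ≤ Gdel.edist v u := SimpleGraph.edist_anti hsub
        _ ≤ GG.edist v u := hdel u
        _ ≤ ecc GG v := edist_le_ecc GG v u
    exact h1.trans (add_le_add h2 h3)
  -- step 3 : gateway gives edist c v + edist v w ≤ ecc c
  have hstep3 : GG.edist c v + GG.edist v w ≤ ecc GG c :=
    hgate.trans (edist_le_ecc GG c w)
  -- combine, all coerced to ℝ≥0∞
  have hcv_ne : ((GG.edist c v : ℕ∞) : ℝ≥0∞) ≠ ⊤ := enat_cast_ne_top (hedfin c v)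
  have hchain : ((GG.edist c v : ℕ∞) : ℝ≥0∞) + (A + ((GG.edist v w : ℕ∞) : ℝ≥0∞)) ≤
      ((GG.edist c v : ℕ∞) : ℝ≥0∞) + ((ecc GG v : ℕ∞) : ℝ≥0∞) := by
    have hstep3' : ((GG.edist c v : ℕ∞) : ℝ≥0∞) + ((GG.edist v w : ℕ∞) : ℝ≥0∞) ≤
        ((ecc GG c : ℕ∞) : ℝ≥0∞) := by
      rw [← ENat.toENNReal_add]
      exact ENat.toENNReal_le.mpr hstep3
    have hstep2' : ((ecc G' c : ℕ∞) : ℝ≥0∞) ≤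
        ((GG.edist c v : ℕ∞) : ℝ≥0∞) + ((ecc GG v : ℕ∞) : ℝ≥0∞) := by
      rw [← ENat.toENNReal_add]
      exact ENat.toENNReal_le.mpr hstep2
    calc ((GG.edist c v : ℕ∞) : ℝ≥0∞) + (A + ((GG.edist v w : ℕ∞) : ℝ≥0∞))
        = A + (((GG.edist c v : ℕ∞) : ℝ≥0∞) + ((GG.edist v w : ℕ∞) : ℝ≥0∞)) := by ring
      _ ≤ A + ((ecc GG c : ℕ∞) : ℝ≥0∞) := add_le_add_right hstep3' A
      _ ≤ ((ecc G' c : ℕ∞) : ℝ≥0∞) := hstep1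
      _ ≤ _ := hstep2'
  exact (ENNReal.add_le_add_iff_left hcv_ne).mp hchain

end M9


end NCG

open NCG
/-- for `α > 2`, if `w` is assigned to its closest vertex `v` of the
biconnected component `B`, then `d_G(v,w) ≤ D(v) + 2 − α`. -/
theorem assigned_vertex_close (n : ℕ) (α : ℝ) (hα : 2 < α)
    (s : Fin n → Finset (Fin n)) (hs : IsEquilibrium α s)
    (hnt : ¬ (graph n s).IsTree)
    (B : Finset (Fin n)) (hB : IsBicomp (graph n s) B)
    (v w : Fin n) (hv : v ∈ B)
    (hclosest : ∀ u ∈ B, (graph n s).edist v w ≤ (graph n s).edist u w) :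
    entoR ((graph n s).edist v w) ≤ entoR (ecc (graph n s) v) + 2 - α := by
  classical
  obtain ⟨hbic, hmax⟩ := hB
  have hecc : ∀ u, ecc (graph n s) u ≠ ⊤ := fun u => ecc_ne_top hs u
  have hedfin : ∀ x y : Fin n, (graph n s).edist x y ≠ ⊤ := fun x y h =>
    hecc x (top_le_iff.mp (h ▸ edist_le_ecc (graph n s) x y))
  have hreach : ∀ x y : Fin n, (graph n s).Reachable x y := fun x y =>
    SimpleGraph.reachable_of_edist_ne_top (hedfin x y)
  obtain ⟨a, b, haB, hbB, hab, b', hcase⟩ := exists_good_edge hbic hv (fun x => hedfin v x)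
  have hdel := delete_edge_dist hab hcase
  have key : ENNReal.ofReal α + ((graph n s).edist v w : ℝ≥0∞) ≤
      ((ecc (graph n s) v : ℕ∞) : ℝ≥0∞) := by
    rcases ((graph_adj s a b).mp hab).2 with hbuy | hbuy
    · exact buyer_chain hs hbuy hdel (gateway hbic hmax hv hclosest hreach haB) hecc
    · have hswap : ({s(b, a)} : Set (Sym2 (Fin n))) = {s(a, b)} := by rw [Sym2.eq_swap]
      have hdel' : ∀ x, ((graph n s).deleteEdges {s(b, a)}).edist v x ≤
          (graph n s).edist v x := by
        intro x; rw [hswap]; exact hdel x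
      exact buyer_chain hs hbuy hdel' (gateway hbic hmax hv hclosest hreach hbB) hecc
  have hd := enat_cast_ne_top (hedfin v w)
  have hE := enat_cast_ne_top (hecc v)
  have h2 := (ENNReal.toReal_le_toReal
    (ENNReal.add_ne_top.mpr ⟨ENNReal.ofReal_ne_top, hd⟩) hE).mpr key
  rw [ENNReal.toReal_add ENNReal.ofReal_ne_top hd,
    ENNReal.toReal_ofReal (by linarith : (0:ℝ) ≤ α)] at h2
  simp only [entoR]
  linarith
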